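/- Let x, y ∈ ℝ², γ > 0. If (θ*, μ*) minimizes F(θ, μ) = (1/2)θ² - θμ·x - γμ·y over θ ≥ 0, |μ| = 1, and θ*x + γy ≠ 0, then μ* = (θ*x + γy)/|θ*x + γy| and θ* = max(0, x·(θ*x + γy)/|θ*x + γy|), i.e., θ* is a fixed point of the iteration map of Algorithm 1. -/

import Mathlib

open RealInnerProductSpace

/-- If `(θ*, μ*)` minimizes `F(θ, μ) = (1/2)θ² - θ μ·x - γ μ·y` over `θ ≥ 0`, `‖μ‖ = 1`,
and `θ*x + γy ≠ 0`, then `μ* = (θ*x + γy)/‖θ*x + γy‖` and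
`θ* = max(0, x·(θ*x + γy)/‖θ*x + γy‖)` (fixed point of the Algorithm 1 iteration map). -/
theorem stmt15 (x y : EuclideanSpace ℝ (Fin 2)) (γ : ℝ) (hγ : 0 < γ)
    (F : ℝ × EuclideanSpace ℝ (Fin 2) → ℝ)
    (hF : ∀ p, F p = (1 / 2) * p.1 ^ 2 - p.1 * ⟪p.2, x⟫ - γ * ⟪p.2, y⟫)
    (θstar : ℝ) (mustar : EuclideanSpace ℝ (Fin 2))
    (hθ : 0 ≤ θstar) (hμ : ‖mustar‖ = 1)
    (hmin : ∀ θ : ℝ, ∀ μ : EuclideanSpace ℝ (Fin 2), 0 ≤ θ → ‖μ‖ = 1 →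
      F (θstar, mustar) ≤ F (θ, μ))
    (hw : θstar • x + γ • y ≠ 0) :
    mustar = ‖θstar • x + γ • y‖⁻¹ • (θstar • x + γ • y) ∧
    θstar = max 0 (⟪x, θstar • x + γ • y⟫ / ‖θstar • x + γ • y‖) := by
  set w : EuclideanSpace ℝ (Fin 2) := θstar • x + γ • y with hwdef
  have hwpos : 0 < ‖w‖ := norm_pos_iff.mpr hw
  have hwn : ‖w‖ ≠ 0 := ne_of_gt hwpos
  -- inner with w decomposition
  have hdec : ∀ μ : EuclideanSpace ℝ (Fin 2), ⟪μ, w⟫ = θstar * ⟪μ, x⟫ + γ * ⟪μ, y⟫ := by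
    intro μ
    rw [hwdef, inner_add_right, real_inner_smul_right, real_inner_smul_right]
  -- candidate μ
  have hnormc : ‖(‖w‖⁻¹ • w : EuclideanSpace ℝ (Fin 2))‖ = 1 := by
    rw [norm_smul, norm_inv, norm_norm, inv_mul_cancel₀ hwn]
  have hinnerc : ⟪(‖w‖⁻¹ • w : EuclideanSpace ℝ (Fin 2)), w⟫ = ‖w‖ := by
    rw [real_inner_smul_left, real_inner_self_eq_norm_sq]
    field_simp
  have h1 := hmin θstar (‖w‖⁻¹ • w) hθ hnormc
  rw [hF, hF] at h1
  simp only at h1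
  have h1' : ‖w‖ ≤ ⟪mustar, w⟫ := by
    have e1 := hdec mustar
    have e2 := hdec (‖w‖⁻¹ • w)
    rw [hinnerc] at e2
    linarith
  have hcs : ⟪mustar, w⟫ ≤ ‖w‖ := by
    calc ⟪mustar, w⟫ ≤ ‖mustar‖ * ‖w‖ := real_inner_le_norm _ _
    _ = ‖w‖ := by rw [hμ, one_mul]
  have heq : ⟪mustar, w⟫ = ‖mustar‖ * ‖w‖ := by rw [hμ, one_mul]; linarith
  have hsm := inner_eq_norm_mul_iff_real.mp heq
  rw [hμ, one_smul] at hsm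
  have hmu : mustar = ‖w‖⁻¹ • w := by
    have h4 : ‖w‖⁻¹ • (‖w‖ • mustar) = ‖w‖⁻¹ • w := by rw [hsm]
    rwa [smul_smul, inv_mul_cancel₀ hwn, one_smul] at h4
  refine ⟨hmu, ?_⟩
  -- part 2
  set a : ℝ := ⟪x, w⟫ / ‖w‖ with hadef
  have hma : ⟪mustar, x⟫ = a := by
    rw [hmu, real_inner_smul_left, real_inner_comm, hadef]
    ring
  set t : ℝ := max 0 a with htdef
  have ht0 : 0 ≤ t := le_max_left _ _
  have h2 := hmin t mustar ht0 hμ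
  rw [hF, hF] at h2
  simp only [hma] at h2
  -- h2 : 1/2 θ*² - θ* a - γ ⟪μ*, y⟫ ≤ 1/2 t² - t a - γ ⟪μ*, y⟫
  have h3 : (1/2) * θstar ^ 2 - θstar * a ≤ (1/2) * t ^ 2 - t * a := by linarith
  clear h1 h1' hcs heq hsm h2 hdec hinnerc hnormc hmu hma hF hmin
  rcases le_or_gt a 0 with ha | ha
  · have htz : t = 0 := max_eq_left ha
    rw [htz] at h3
    have hz : θstar = 0 := by nlinarith [mul_nonpos_of_nonneg_of_nonpos hθ ha]
    rw [hz, htz]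
  · have hta : t = a := max_eq_right (le_of_lt ha)
    rw [hta] at h3
    have hz : θstar = a := by nlinarith [sq_nonneg (θstar - a)]
    rw [hz, hta]
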